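/- Let (S₁,S₂,I₁,I₂,R₁,R₂,D₁,D₂) be a solution of the two-group active-population SIRD model on [0,∞) with Nᵢ(t) > 0 for all t ≥ 0, with initial data Sᵢ(0) > 0, Iᵢ(0), Rᵢ(0), Dᵢ(0) ≥ 0, all compartments remaining in [0, Ñᵢ] where Ñᵢ = Sᵢ(0)+Iᵢ(0)+Rᵢ(0)+Dᵢ(0), and suppose the limits Sᵢ^∞, Iᵢ^∞, Rᵢ^∞, Dᵢ^∞ of the compartments as t → ∞ exist with Iᵢ^∞ = 0. Then for each i = 1,2: (i) Sᵢ^∞ = Ñᵢ − Rᵢ^∞ − Dᵢ^∞; (ii) Rᵢ^∞ = (γᵢ/(γᵢ+μᵢ))·(Sᵢ(0)+Iᵢ(0)−Sᵢ^∞) + Rᵢ(0); (iii) Dᵢ^∞ = (μᵢ/(γᵢ+μᵢ))·(Sᵢ(0)+Iᵢ(0)−Sᵢ^∞) + Dᵢ(0). -/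

import Mathlib

open Filter

lemma const_limit_aux {f : ℝ → ℝ} {L : ℝ} (hf : ∀ t ≥ (0:ℝ), HasDerivAt f 0 t)
    (hlim : Tendsto f atTop (nhds L)) : L = f 0 := by
  have hconst : ∀ t ≥ (0:ℝ), f t = f 0 := by
    intro t ht
    have h := (convex_Ici (0:ℝ)).norm_image_sub_le_of_norm_hasDerivWithin_le
      (f' := fun _ => (0:ℝ)) (C := 0)
      (fun x hx => (hf x hx).hasDerivWithinAt) (fun x _ => by simp)
      (Set.self_mem_Ici) ht
    have h2 : |f t - f 0| ≤ 0 := by simpa using h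
    have := abs_nonpos_iff.mp h2
    linarith
  have h2 : Tendsto f atTop (nhds (f 0)) := by
    refine Tendsto.congr' ?_ tendsto_const_nhds
    filter_upwards [eventually_ge_atTop (0:ℝ)] with t ht using (hconst t ht).symm
  exact tendsto_nhds_unique hlim h2

lemma sird_group_aux (γ μ : ℝ) (hγ : 0 < γ) (hμ : 0 < μ)
    (S I R D X : ℝ → ℝ)
    (hS' : ∀ t ≥ (0:ℝ), HasDerivAt S (-(X t) * S t) t)
    (hI' : ∀ t ≥ (0:ℝ), HasDerivAt I (X t * S t - (γ + μ) * I t) t)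
    (hR' : ∀ t ≥ (0:ℝ), HasDerivAt R (γ * I t) t)
    (hD' : ∀ t ≥ (0:ℝ), HasDerivAt D (μ * I t) t)
    (Sinf Rinf Dinf : ℝ)
    (hS : Tendsto S atTop (nhds Sinf)) (hI : Tendsto I atTop (nhds 0))
    (hR : Tendsto R atTop (nhds Rinf)) (hD : Tendsto D atTop (nhds Dinf)) :
    Sinf = (S 0 + I 0 + R 0 + D 0) - Rinf - Dinf ∧
    Rinf = γ / (γ + μ) * (S 0 + I 0 - Sinf) + R 0 ∧
    Dinf = μ / (γ + μ) * (S 0 + I 0 - Sinf) + D 0 := by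
  have hne : γ + μ ≠ 0 := by positivity
  have e1 : Sinf + 0 + Rinf + Dinf = S 0 + I 0 + R 0 + D 0 := by
    have hf : ∀ t ≥ (0:ℝ), HasDerivAt (fun t => S t + I t + R t + D t) 0 t := by
      intro t ht
      have h := (((hS' t ht).add (hI' t ht)).add (hR' t ht)).add (hD' t ht)
      convert h using 1
      · rfl
      · rfl
      · rfl
      · ring
    simpa using const_limit_aux hf (((hS.add hI).add hR).add hD)
  have e2 : μ * Rinf - γ * Dinf = μ * R 0 - γ * D 0 := by
    have hf : ∀ t ≥ (0:ℝ), HasDerivAt (fun t => μ * R t - γ * D t) 0 t := by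
      intro t ht
      have h := ((hR' t ht).const_mul μ).sub ((hD' t ht).const_mul γ)
      convert h using 1
      · rfl
      · rfl
      · rfl
      · ring
    simpa using const_limit_aux hf ((hR.const_mul μ).sub (hD.const_mul γ))
  refine ⟨by linarith, ?_, ?_⟩
  · have h : (γ + μ) * Rinf = γ * (S 0 + I 0 - Sinf) + (γ + μ) * R 0 := by
      linear_combination γ * e1 + e2
    field_simp
    linear_combination h
  · have h : (γ + μ) * Dinf = μ * (S 0 + I 0 - Sinf) + (γ + μ) * D 0 := by
      linear_combination μ * e1 - e2
    field_simp
    linear_combination h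

theorem stmt_3
    (β11 β12 β21 β22 γ1 γ2 μ1 μ2 : ℝ)
    (hβ11 : 0 < β11) (hβ12 : 0 < β12) (hβ21 : 0 < β21) (hβ22 : 0 < β22)
    (hγ1 : 0 < γ1) (hγ2 : 0 < γ2) (hμ1 : 0 < μ1) (hμ2 : 0 < μ2)
    (S1 S2 I1 I2 R1 R2 D1 D2 N1 N2 : ℝ → ℝ)
    (hN1 : ∀ t, N1 t = S1 t + I1 t + R1 t)
    (hN2 : ∀ t, N2 t = S2 t + I2 t + R2 t)
    (hS1' : ∀ t ≥ (0:ℝ), HasDerivAt S1 (-(β11 * I1 t / N1 t + β12 * I2 t / N2 t) * S1 t) t)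
    (hS2' : ∀ t ≥ (0:ℝ), HasDerivAt S2 (-(β21 * I1 t / N1 t + β22 * I2 t / N2 t) * S2 t) t)
    (hI1' : ∀ t ≥ (0:ℝ), HasDerivAt I1 ((β11 * I1 t / N1 t + β12 * I2 t / N2 t) * S1 t - (γ1 + μ1) * I1 t) t)
    (hI2' : ∀ t ≥ (0:ℝ), HasDerivAt I2 ((β21 * I1 t / N1 t + β22 * I2 t / N2 t) * S2 t - (γ2 + μ2) * I2 t) t)
    (hR1' : ∀ t ≥ (0:ℝ), HasDerivAt R1 (γ1 * I1 t) t)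
    (hR2' : ∀ t ≥ (0:ℝ), HasDerivAt R2 (γ2 * I2 t) t)
    (hD1' : ∀ t ≥ (0:ℝ), HasDerivAt D1 (μ1 * I1 t) t)
    (hD2' : ∀ t ≥ (0:ℝ), HasDerivAt D2 (μ2 * I2 t) t)
    (hN1pos : ∀ t ≥ (0:ℝ), 0 < N1 t)
    (hN2pos : ∀ t ≥ (0:ℝ), 0 < N2 t)
    (hS10 : 0 < S1 0) (hS20 : 0 < S2 0)
    (hI10 : 0 ≤ I1 0) (hI20 : 0 ≤ I2 0)
    (hR10 : 0 ≤ R1 0) (hR20 : 0 ≤ R2 0)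
    (hD10 : 0 ≤ D1 0) (hD20 : 0 ≤ D2 0)
    (hbox1 : ∀ t ≥ (0:ℝ), (0 ≤ S1 t ∧ S1 t ≤ S1 0 + I1 0 + R1 0 + D1 0) ∧
      (0 ≤ I1 t ∧ I1 t ≤ S1 0 + I1 0 + R1 0 + D1 0) ∧
      (0 ≤ R1 t ∧ R1 t ≤ S1 0 + I1 0 + R1 0 + D1 0) ∧
      (0 ≤ D1 t ∧ D1 t ≤ S1 0 + I1 0 + R1 0 + D1 0))
    (hbox2 : ∀ t ≥ (0:ℝ), (0 ≤ S2 t ∧ S2 t ≤ S2 0 + I2 0 + R2 0 + D2 0) ∧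
      (0 ≤ I2 t ∧ I2 t ≤ S2 0 + I2 0 + R2 0 + D2 0) ∧
      (0 ≤ R2 t ∧ R2 t ≤ S2 0 + I2 0 + R2 0 + D2 0) ∧
      (0 ≤ D2 t ∧ D2 t ≤ S2 0 + I2 0 + R2 0 + D2 0))
    (S1inf R1inf D1inf S2inf R2inf D2inf : ℝ)
    (hS1inf : Tendsto S1 atTop (nhds S1inf)) (hS2inf : Tendsto S2 atTop (nhds S2inf))
    (hI1inf : Tendsto I1 atTop (nhds 0)) (hI2inf : Tendsto I2 atTop (nhds 0))
    (hR1inf : Tendsto R1 atTop (nhds R1inf)) (hR2inf : Tendsto R2 atTop (nhds R2inf))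
    (hD1inf : Tendsto D1 atTop (nhds D1inf)) (hD2inf : Tendsto D2 atTop (nhds D2inf)) :
    (S1inf = (S1 0 + I1 0 + R1 0 + D1 0) - R1inf - D1inf ∧
     R1inf = γ1 / (γ1 + μ1) * (S1 0 + I1 0 - S1inf) + R1 0 ∧
     D1inf = μ1 / (γ1 + μ1) * (S1 0 + I1 0 - S1inf) + D1 0) ∧
    (S2inf = (S2 0 + I2 0 + R2 0 + D2 0) - R2inf - D2inf ∧
     R2inf = γ2 / (γ2 + μ2) * (S2 0 + I2 0 - S2inf) + R2 0 ∧
     D2inf = μ2 / (γ2 + μ2) * (S2 0 + I2 0 - S2inf) + D2 0) := by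
  constructor
  · exact sird_group_aux γ1 μ1 hγ1 hμ1 S1 I1 R1 D1
      (fun t => β11 * I1 t / N1 t + β12 * I2 t / N2 t)
      hS1' hI1' hR1' hD1' S1inf R1inf D1inf hS1inf hI1inf hR1inf hD1inf
  · exact sird_group_aux γ2 μ2 hγ2 hμ2 S2 I2 R2 D2
      (fun t => β21 * I1 t / N1 t + β22 * I2 t / N2 t)
      hS2' hI2' hR2' hD2' S2inf R2inf D2inf hS2inf hI2inf hR2inf hD2inf
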